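/- Let n ≡ 8 (mod 25) and let x_1,...,x_n ∈ Z/5Z. Suppose that the multiset {0} ∪ {x_i, 2x_i, -x_i, -2x_i : 1 ≤ i ≤ n} ∪ {x_i+x_j, x_i-x_j, -x_i+x_j, -x_i-x_j : 1 ≤ i < j ≤ n} contains every element of Z/5Z exactly m times, where 2n^2+2n+1 = 5m. Then a contradiction follows (no such x_1,...,x_n exist). -/

import Mathlib

open Finset

/-- Count of `c` in the pair-multiset, as a function of the two values. -/
def Gc (c a b : ZMod 5) : ℕ := Multiset.count c {a + b, a - b, -a + b, -a - b}

/-- Count of `c` in the singleton-multiset, as a function of the value. -/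
def Fc (c a : ZMod 5) : ℕ := Multiset.count c {a, 2 * a, -a, -(2 * a)}

lemma Gc_symm : ∀ c a b : ZMod 5, Gc c a b = Gc c b a := by decide

lemma expand_zmod5 (f : ZMod 5 → ℕ) : ∑ t : ZMod 5, f t = f 0 + f 1 + f 2 + f 3 + f 4 := by
  show ∑ t : Fin 5, f t = _
  exact Fin.sum_univ_five f

lemma sum_fiber {n : ℕ} (x : Fin n → ZMod 5) (F : ZMod 5 → ℕ) :
    ∑ i, F (x i) = ∑ t : ZMod 5, (univ.filter fun i => x i = t).card * F t := by
  rw [← Finset.sum_fiberwise univ x (fun i => F (x i))]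
  refine Finset.sum_congr rfl fun t _ => ?_
  rw [Finset.sum_congr rfl (fun i hi => by rw [(Finset.mem_filter.mp hi).2]),
    Finset.sum_const, smul_eq_mul]

lemma sym_pairs {n : ℕ} (g : Fin n → Fin n → ℕ) (hsym : ∀ i j, g i j = g j i) :
    2 * ∑ q ∈ univ.filter (fun q : Fin n × Fin n => q.1 < q.2), g q.1 q.2 + ∑ i, g i i
      = ∑ i, ∑ j, g i j := by
  have htot : ∑ i, ∑ j, g i j = ∑ q ∈ (univ : Finset (Fin n × Fin n)), g q.1 q.2 := by
    rw [← Finset.sum_product']; rfl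
  rw [htot, ← Finset.sum_filter_add_sum_filter_not univ (fun q : Fin n × Fin n => q.1 < q.2)]
  have hsplit : (univ.filter (fun q : Fin n × Fin n => ¬ q.1 < q.2))
      = (univ.filter (fun q : Fin n × Fin n => q.2 < q.1)) ∪
        (univ.filter (fun q : Fin n × Fin n => q.1 = q.2)) := by
    ext q
    simp only [mem_filter, mem_union, mem_univ, true_and]
    omega
  have hdisj : Disjoint (univ.filter (fun q : Fin n × Fin n => q.2 < q.1))
      (univ.filter (fun q : Fin n × Fin n => q.1 = q.2)) := by
    refine Finset.disjoint_left.mpr ?_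
    intro q hq hq'
    simp only [mem_filter, mem_univ, true_and] at hq hq'
    omega
  rw [hsplit, Finset.sum_union hdisj]
  have hgt : ∑ q ∈ univ.filter (fun q : Fin n × Fin n => q.2 < q.1), g q.1 q.2
      = ∑ q ∈ univ.filter (fun q : Fin n × Fin n => q.1 < q.2), g q.1 q.2 := by
    refine Finset.sum_nbij' (fun q => (q.2, q.1)) (fun q => (q.2, q.1)) ?_ ?_ ?_ ?_ ?_ <;>
      simp_all [hsym]
  have hdiag : ∑ q ∈ univ.filter (fun q : Fin n × Fin n => q.1 = q.2), g q.1 q.2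
      = ∑ i, g i i := by
    refine Finset.sum_nbij' (fun q => q.1) (fun i => (i, i)) ?_ ?_ ?_ ?_ ?_ <;> simp_all
  rw [hgt, hdiag]
  ring

open Finset in
/-- If n ≡ 8 (mod 25) and 2n²+2n+1 = 5m, then the multiset
{0} ∪ {±xᵢ, ±2xᵢ} ∪ {±xᵢ ± xⱼ : i < j} cannot contain every element of ℤ/5ℤ
exactly m times. -/
theorem no_equidistributed_multiset (n : ℕ) (hn : n % 25 = 8) (x : Fin n → ZMod 5)
    (m : ℕ) (hm : 2 * n ^ 2 + 2 * n + 1 = 5 * m)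
    (h : ∀ c : ZMod 5,
      Multiset.count c
        (({0} : Multiset (ZMod 5))
          + (Finset.univ.val.bind fun i : Fin n =>
              {x i, 2 * x i, -x i, -(2 * x i)})
          + ((Finset.univ.filter fun q : Fin n × Fin n => q.1 < q.2).val.bind fun q =>
              {x q.1 + x q.2, x q.1 - x q.2, -x q.1 + x q.2, -x q.1 - x q.2})) = m) :
    False := by
  have main : ∀ c : ZMod 5,
      2 * m + (∑ t : ZMod 5, (univ.filter fun i => x i = t).card * Gc c t t)
        = 2 * (if c = 0 then 1 else 0)
          + 2 * (∑ t : ZMod 5, (univ.filter fun i => x i = t).card * Fc c t)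
          + (∑ t : ZMod 5, (univ.filter fun i => x i = t).card *
              ∑ s : ZMod 5, (univ.filter fun i => x i = s).card * Gc c s t) := by
    intro c
    have hc : (if c = 0 then 1 else 0) + (∑ i, Fc c (x i))
        + (∑ q ∈ univ.filter (fun q : Fin n × Fin n => q.1 < q.2), Gc c (x q.1) (x q.2))
        = m := by
      rw [← h c, Multiset.count_add, Multiset.count_add, Multiset.count_bind,
        Multiset.count_bind, Multiset.count_singleton, Finset.sum_eq_multiset_sum,
        Finset.sum_eq_multiset_sum]
      simp only [Fc, Gc]
    have hsy : 2 * ∑ q ∈ univ.filter (fun q : Fin n × Fin n => q.1 < q.2),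
          Gc c (x q.1) (x q.2) + ∑ i, Gc c (x i) (x i) = ∑ i, ∑ j, Gc c (x i) (x j) :=
      sym_pairs (fun i j => Gc c (x i) (x j)) (fun i j => Gc_symm c (x i) (x j))
    have t1 : ∑ i, Fc c (x i)
        = ∑ t : ZMod 5, (univ.filter fun i => x i = t).card * Fc c t := sum_fiber x (Fc c)
    have t2 : ∑ i, Gc c (x i) (x i)
        = ∑ t : ZMod 5, (univ.filter fun i => x i = t).card * Gc c t t :=
      sum_fiber x (fun t => Gc c t t)
    have t3 : ∑ i, ∑ j, Gc c (x i) (x j)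
        = ∑ t : ZMod 5, (univ.filter fun i => x i = t).card *
            ∑ s : ZMod 5, (univ.filter fun i => x i = s).card * Gc c s t := by
      calc ∑ i, ∑ j, Gc c (x i) (x j)
          = ∑ i, ∑ t : ZMod 5, (univ.filter fun j => x j = t).card * Gc c (x i) t :=
            Finset.sum_congr rfl fun i _ => sum_fiber x (Gc c (x i))
        _ = ∑ t : ZMod 5, ∑ i, (univ.filter fun j => x j = t).card * Gc c (x i) t :=
            Finset.sum_comm
        _ = ∑ t : ZMod 5, (univ.filter fun j => x j = t).card * ∑ i, Gc c (x i) t :=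
            Finset.sum_congr rfl fun t _ => (Finset.mul_sum _ _ _).symm
        _ = ∑ t : ZMod 5, (univ.filter fun i => x i = t).card *
              ∑ s : ZMod 5, (univ.filter fun i => x i = s).card * Gc c s t :=
            Finset.sum_congr rfl fun t _ =>
              congrArg (HMul.hMul ((univ.filter fun i => x i = t).card))
                (sum_fiber x (fun s => Gc c s t))
    linarith [hc, hsy, t1, t2, t3]
  have hsum : (univ.filter fun i => x i = (0:ZMod 5)).card
      + (univ.filter fun i => x i = (1:ZMod 5)).card
      + (univ.filter fun i => x i = (2:ZMod 5)).card
      + (univ.filter fun i => x i = (3:ZMod 5)).card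
      + (univ.filter fun i => x i = (4:ZMod 5)).card = n := by
    have := Finset.card_eq_sum_card_fiberwise
      (f := x) (s := (univ : Finset (Fin n))) (t := (univ : Finset (ZMod 5)))
      (fun i _ => Finset.mem_univ _)
    rw [Finset.card_univ, Fintype.card_fin] at this
    rw [← expand_zmod5 (fun t => (univ.filter fun i => x i = t).card)]
    exact this.symm
  have e0 := main 0
  have e1 := main 1
  have e2 := main 2
  simp only [expand_zmod5] at e0 e1 e2
  simp only [show Gc 0 0 0 = 4 from by decide,
    show Gc 0 0 1 = 0 from by decide,
    show Gc 0 0 2 = 0 from by decide,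
    show Gc 0 0 3 = 0 from by decide,
    show Gc 0 0 4 = 0 from by decide,
    show Gc 0 1 0 = 0 from by decide,
    show Gc 0 1 1 = 2 from by decide,
    show Gc 0 1 2 = 0 from by decide,
    show Gc 0 1 3 = 0 from by decide,
    show Gc 0 1 4 = 2 from by decide,
    show Gc 0 2 0 = 0 from by decide,
    show Gc 0 2 1 = 0 from by decide,
    show Gc 0 2 2 = 2 from by decide,
    show Gc 0 2 3 = 2 from by decide,
    show Gc 0 2 4 = 0 from by decide,
    show Gc 0 3 0 = 0 from by decide,
    show Gc 0 3 1 = 0 from by decide,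
    show Gc 0 3 2 = 2 from by decide,
    show Gc 0 3 3 = 2 from by decide,
    show Gc 0 3 4 = 0 from by decide,
    show Gc 0 4 0 = 0 from by decide,
    show Gc 0 4 1 = 2 from by decide,
    show Gc 0 4 2 = 0 from by decide,
    show Gc 0 4 3 = 0 from by decide,
    show Gc 0 4 4 = 2 from by decide,
    show Fc 0 0 = 4 from by decide,
    show Fc 0 1 = 0 from by decide,
    show Fc 0 2 = 0 from by decide,
    show Fc 0 3 = 0 from by decide,
    show Fc 0 4 = 0 from by decide,
    show Gc 1 0 0 = 0 from by decide,
    show Gc 1 0 1 = 2 from by decide,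
    show Gc 1 0 2 = 0 from by decide,
    show Gc 1 0 3 = 0 from by decide,
    show Gc 1 0 4 = 2 from by decide,
    show Gc 1 1 0 = 2 from by decide,
    show Gc 1 1 1 = 0 from by decide,
    show Gc 1 1 2 = 1 from by decide,
    show Gc 1 1 3 = 1 from by decide,
    show Gc 1 1 4 = 0 from by decide,
    show Gc 1 2 0 = 0 from by decide,
    show Gc 1 2 1 = 1 from by decide,
    show Gc 1 2 2 = 1 from by decide,
    show Gc 1 2 3 = 1 from by decide,
    show Gc 1 2 4 = 1 from by decide,
    show Gc 1 3 0 = 0 from by decide,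
    show Gc 1 3 1 = 1 from by decide,
    show Gc 1 3 2 = 1 from by decide,
    show Gc 1 3 3 = 1 from by decide,
    show Gc 1 3 4 = 1 from by decide,
    show Gc 1 4 0 = 2 from by decide,
    show Gc 1 4 1 = 0 from by decide,
    show Gc 1 4 2 = 1 from by decide,
    show Gc 1 4 3 = 1 from by decide,
    show Gc 1 4 4 = 0 from by decide,
    show Fc 1 0 = 0 from by decide,
    show Fc 1 1 = 1 from by decide,
    show Fc 1 2 = 1 from by decide,
    show Fc 1 3 = 1 from by decide,
    show Fc 1 4 = 1 from by decide,
    show Gc 2 0 0 = 0 from by decide,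
    show Gc 2 0 1 = 0 from by decide,
    show Gc 2 0 2 = 2 from by decide,
    show Gc 2 0 3 = 2 from by decide,
    show Gc 2 0 4 = 0 from by decide,
    show Gc 2 1 0 = 0 from by decide,
    show Gc 2 1 1 = 1 from by decide,
    show Gc 2 1 2 = 1 from by decide,
    show Gc 2 1 3 = 1 from by decide,
    show Gc 2 1 4 = 1 from by decide,
    show Gc 2 2 0 = 2 from by decide,
    show Gc 2 2 1 = 1 from by decide,
    show Gc 2 2 2 = 0 from by decide,
    show Gc 2 2 3 = 0 from by decide,
    show Gc 2 2 4 = 1 from by decide,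
    show Gc 2 3 0 = 2 from by decide,
    show Gc 2 3 1 = 1 from by decide,
    show Gc 2 3 2 = 0 from by decide,
    show Gc 2 3 3 = 0 from by decide,
    show Gc 2 3 4 = 1 from by decide,
    show Gc 2 4 0 = 0 from by decide,
    show Gc 2 4 1 = 1 from by decide,
    show Gc 2 4 2 = 1 from by decide,
    show Gc 2 4 3 = 1 from by decide,
    show Gc 2 4 4 = 1 from by decide,
    show Fc 2 0 = 0 from by decide,
    show Fc 2 1 = 1 from by decide,
    show Fc 2 2 = 1 from by decide,
    show Fc 2 3 = 1 from by decide,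
    show Fc 2 4 = 1 from by decide,
    show ((if (0:ZMod 5) = 0 then 1 else 0 : ℕ)) = 1 from by decide,
    show ((if (1:ZMod 5) = 0 then 1 else 0 : ℕ)) = 0 from by decide,
    show ((if (2:ZMod 5) = 0 then 1 else 0 : ℕ)) = 0 from by decide,
    if_true] at e0 e1 e2
  zify at e0 e1 e2 hsum
  set A := (((univ.filter fun i : Fin n => x i = (0:ZMod 5)).card : ℕ) : ℤ) with hA
  set B := (((univ.filter fun i : Fin n => x i = (1:ZMod 5)).card : ℕ) : ℤ) with hB
  set C := (((univ.filter fun i : Fin n => x i = (2:ZMod 5)).card : ℕ) : ℤ) with hC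
  set D := (((univ.filter fun i : Fin n => x i = (3:ZMod 5)).card : ℕ) : ℤ) with hD
  set E := (((univ.filter fun i : Fin n => x i = (4:ZMod 5)).card : ℕ) : ℤ) with hE
  obtain ⟨N, hN⟩ : ∃ N, n = 25 * N + 8 := ⟨n / 25, by omega⟩
  have hnZ : (n : ℤ) = 25 * (N : ℤ) + 8 := by exact_mod_cast congrArg (Nat.cast : ℕ → ℤ) hN
  have hcase : ((C + D) - (B + E)) * (5 * A + 1 - (n : ℤ)) = 0 := by
    linear_combination e1 - e2 + (C + D - B - E) * hsum
  rcases mul_eq_zero.mp hcase with hcv | hc5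
  · have key : 4*A^2 - 4*A*(B+E) + (B+E)^2 + 4*A + 2 - 7*(B+E) = 0 := by
      linear_combination (e1 - e0) + ((B+E) - (C+D) + 3) * hcv
    have hk : A = 25*(N:ℤ) + 8 - 2*(B+E) := by linarith [hsum, hcv, hnZ]
    obtain ⟨W, hW⟩ : ∃ W : ℤ, 25 * W = -15 :=
      ⟨100*N^2 + 68*N - 20*N*(B+E) + (B+E)^2 - 7*(B+E) + 11,
        by linear_combination key - (4*A + 100*(N:ℤ) + 36 - 12*(B+E)) * hk⟩
    omega
  · omega
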